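/- Assume U is finite-dimensional and let J be a dynamical twist for U. Let H_J denote the weak Hopf algebra obtained from H = End_k(A)⊗U by twisting with (ĴΘ, Θ̄Ĵ⁻¹), with comultiplication Δ_J(h) = Θ̄Ĵ⁻¹Δ_H(h)ĴΘ. For λ¹,λ² ∈ T and x ∈ U*, define φ^x_{λ¹λ²} ∈ (H_J)* by φ^x_{λ¹λ²}(E_{ν¹ν²}u) = δ_{λ¹ν¹}δ_{λ²ν²}x(u). Call x ∈ U* homogeneous of weight (α¹,α²) if x(u) = x(P_{α¹}uP_{α²}) for all u ∈ U. Then for x homogeneous of weight (α¹,α²) and y homogeneous of weight (β¹,β²), the convolution product of the dual weak Hopf algebra (H_J)* (defined by ⟨φψ,h⟩ = ⟨φ⊗ψ, Δ_J(h)⟩) satisfies φ^y_{μ¹μ²}·φ^x_{λ¹λ²} = δ_{α¹,μ¹−λ¹}δ_{α²,μ²−λ²}·φ^z_{λ¹λ²}, where z ∈ U* is given by z(u) = (y⊗x)(J(λ¹)⁻¹Δ(u)J(λ²)). -/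

import Mathlib

open TensorProduct

noncomputable section

namespace WHA

variable (k B : Type*) [Field k] [Ring B] [Algebra k B]

/-- `x ↦ x ⊗ 1`, the embedding of `B ⊗ B` into legs 1,2 of `B ⊗ B ⊗ B`. -/
def leg12 : B ⊗[k] B →ₗ[k] B ⊗[k] (B ⊗[k] B) :=
  (TensorProduct.assoc k B B B).toLinearMap ∘ₗ (TensorProduct.mk k (B ⊗[k] B) B).flip 1

/-- `x ↦ 1 ⊗ x`, the embedding of `B ⊗ B` into legs 2,3 of `B ⊗ B ⊗ B`. -/
def leg23 : B ⊗[k] B →ₗ[k] B ⊗[k] (B ⊗[k] B) :=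
  TensorProduct.mk k B (B ⊗[k] B) 1

/-- `a ⊗ b ↦ a ⊗ 1 ⊗ b`, the embedding of `B ⊗ B` into legs 1,3 of `B ⊗ B ⊗ B`. -/
def leg13 : B ⊗[k] B →ₗ[k] B ⊗[k] (B ⊗[k] B) :=
  TensorProduct.map LinearMap.id (TensorProduct.mk k B B 1)

/-- `Δ ⊗ id`, landing in the right-associated triple tensor product. -/
def ext12 (Δ : B →ₗ[k] B ⊗[k] B) : B ⊗[k] B →ₗ[k] B ⊗[k] (B ⊗[k] B) :=
  (TensorProduct.assoc k B B B).toLinearMap ∘ₗ TensorProduct.map Δ LinearMap.id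

/-- `id ⊗ Δ`. -/
def ext23 (Δ : B →ₗ[k] B ⊗[k] B) : B ⊗[k] B →ₗ[k] B ⊗[k] (B ⊗[k] B) :=
  TensorProduct.map LinearMap.id Δ

/-- `(ε ⊗ id)` composed with the canonical isomorphism `k ⊗ B ≅ B`. -/
def epsL (ε : B →ₗ[k] k) : B ⊗[k] B →ₗ[k] B :=
  (TensorProduct.lid k B).toLinearMap ∘ₗ TensorProduct.map ε LinearMap.id

/-- `(id ⊗ ε)` composed with the canonical isomorphism `B ⊗ k ≅ B`. -/
def epsR (ε : B →ₗ[k] k) : B ⊗[k] B →ₗ[k] B :=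
  (TensorProduct.rid k B).toLinearMap ∘ₗ TensorProduct.map LinearMap.id ε

/-- Pairing of two linear functionals against an element of `B ⊗ B`. -/
def pairF (φ ψ : B →ₗ[k] k) : B ⊗[k] B →ₗ[k] k :=
  (TensorProduct.lid k k).toLinearMap ∘ₗ TensorProduct.map φ ψ

/-- The multiplication map `B ⊗ B → B`. -/
def mul2 : B ⊗[k] B →ₗ[k] B := LinearMap.mul' k B

end WHA

namespace DQG

variable (k : Type*) [Field k]
variable (T : Type*) [AddCommGroup T] [Fintype T] [DecidableEq T]
variable (U : Type*) [Ring U] [HopfAlgebra k U]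

/-- The matrix units `E_{λμ}`. -/
def E (l m : T) : Matrix T T k := Matrix.single l m 1

/-- The `(λ,μ)` matrix entry, as a linear functional. -/
def entry (l m : T) : Matrix T T k →ₗ[k] k where
  toFun A := A l m
  map_add' _ _ := rfl
  map_smul' _ _ := rfl

/-- The comultiplication of `End_k(A)`: `Δ(E_{λμ}) = E_{λμ} ⊗ E_{λμ}`. -/
def ΔM : Matrix T T k →ₗ[k] Matrix T T k ⊗[k] Matrix T T k :=
  ∑ l : T, ∑ m : T, (entry k T l m).smulRight (E k T l m ⊗ₜ[k] E k T l m)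

/-- The counit of `End_k(A)`: `ε(E_{λμ}) = 1`. -/
def εM : Matrix T T k →ₗ[k] k := ∑ l : T, ∑ m : T, entry k T l m

/-- The antipode of `End_k(A)`: `S(E_{λμ}) = E_{μλ}`. -/
def SM : Matrix T T k →ₗ[k] Matrix T T k :=
  ∑ l : T, ∑ m : T, (entry k T l m).smulRight (E k T m l)

/-- The comultiplication of the tensor product weak Hopf algebra `H = End_k(A) ⊗ U`. -/
def ΔH : (Matrix T T k ⊗[k] U) →ₗ[k] (Matrix T T k ⊗[k] U) ⊗[k] (Matrix T T k ⊗[k] U) :=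
  (TensorProduct.tensorTensorTensorComm k (Matrix T T k) (Matrix T T k) U U).toLinearMap ∘ₗ
    TensorProduct.map (ΔM k T) Coalgebra.comul

/-- The counit of `H = End_k(A) ⊗ U`. -/
def εH : (Matrix T T k ⊗[k] U) →ₗ[k] k :=
  (TensorProduct.lid k k).toLinearMap ∘ₗ TensorProduct.map (εM k T) Coalgebra.counit

/-- The antipode of `H = End_k(A) ⊗ U`. -/
def SH : (Matrix T T k ⊗[k] U) →ₗ[k] (Matrix T T k ⊗[k] U) :=
  TensorProduct.map (SM k T) (HopfAlgebra.antipode (R := k))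

set_option maxHeartbeats 1000000 in
/-- The canonical ring structure on the triple tensor power of `H = End_k(A) ⊗ U`
(made explicit to help instance resolution). -/
instance triRing : Ring ((Matrix T T k ⊗[k] U) ⊗[k] ((Matrix T T k ⊗[k] U) ⊗[k] (Matrix T T k ⊗[k] U))) := by
  exact Algebra.TensorProduct.instRing (R := k) (A := Matrix T T k ⊗[k] U)
    (B := (Matrix T T k ⊗[k] U) ⊗[k] (Matrix T T k ⊗[k] U))

variable (P : T → U)

/-- The hypotheses on the system of idempotents `{P_μ}` spanning the abelian Hopf
subalgebra `A ⊆ U`. -/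
structure IsPSystem : Prop where
  orth : ∀ m n : T, P m * P n = if m = n then P m else 0
  sum_one : ∑ m : T, P m = 1
  comul_P : ∀ m : T, Coalgebra.comul (R := k) (P m) = ∑ n : T, P n ⊗ₜ[k] P (m - n)
  counit_P : ∀ m : T, Coalgebra.counit (R := k) (P m) = if m = 0 then (1 : k) else 0
  antipode_P : ∀ m : T, HopfAlgebra.antipode (R := k) (P m) = P (-m)

/-- The element `Θ = Σ_{λμ} E_{λ,λ+μ} ⊗ E_{λλ}P_μ` of `H ⊗ H`. -/
def Θ : (Matrix T T k ⊗[k] U) ⊗[k] (Matrix T T k ⊗[k] U) :=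
  ∑ l : T, ∑ m : T, ((E k T l (l + m)) ⊗ₜ[k] (1 : U)) ⊗ₜ[k] ((E k T l l) ⊗ₜ[k] P m)

/-- The element `Θ̄ = Σ_{λμ} E_{λ+μ,λ} ⊗ E_{λλ}P_μ` of `H ⊗ H`. -/
def Θbar : (Matrix T T k ⊗[k] U) ⊗[k] (Matrix T T k ⊗[k] U) :=
  ∑ l : T, ∑ m : T, ((E k T (l + m) l) ⊗ₜ[k] (1 : U)) ⊗ₜ[k] ((E k T l l) ⊗ₜ[k] P m)

/-- `u ⊗ v ↦ (E_{λλ} ⊗ u) ⊗ (E_{λλ} ⊗ v)`. -/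
def embAt (l : T) : U ⊗[k] U →ₗ[k] (Matrix T T k ⊗[k] U) ⊗[k] (Matrix T T k ⊗[k] U) :=
  TensorProduct.map (TensorProduct.mk k (Matrix T T k) U (E k T l l))
    (TensorProduct.mk k (Matrix T T k) U (E k T l l))

/-- The embedding `J ↦ Ĵ = Σ_λ E_{λλ}J⁽¹⁾(λ) ⊗ E_{λλ}J⁽²⁾(λ)` of a
`U ⊗ U`-valued function on `T` into `H ⊗ H`. -/
def emb (J : T → U ⊗[k] U) : (Matrix T T k ⊗[k] U) ⊗[k] (Matrix T T k ⊗[k] U) := ∑ l : T, embAt k T U l (J l)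

/-- `x = a ⊗ b ↦ a ⊗ b ⊗ P_μ ∈ U ⊗ U ⊗ U`. -/
def withP (m : T) : U ⊗[k] U →ₗ[k] U ⊗[k] (U ⊗[k] U) :=
  TensorProduct.map LinearMap.id ((TensorProduct.mk k U U).flip (P m))

/-- `x ↦ P_μ ⊗ x ∈ U ⊗ U ⊗ U`. -/
def withPleft (m : T) : U ⊗[k] U →ₗ[k] U ⊗[k] (U ⊗[k] U) :=
  TensorProduct.mk k U (U ⊗[k] U) (P m)

/-- `J` is a dynamical twist for `U`, with pointwise inverse `Jbar`. -/
structure IsDynTwist (J Jbar : T → U ⊗[k] U) : Prop where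
  inv_right : ∀ l : T, J l * Jbar l = 1
  inv_left : ∀ l : T, Jbar l * J l = 1
  zero_weight : ∀ l m : T,
    J l * Coalgebra.comul (R := k) (P m) = Coalgebra.comul (R := k) (P m) * J l
  counit_left : ∀ l : T, WHA.epsL k U Coalgebra.counit (J l) = 1
  counit_right : ∀ l : T, WHA.epsR k U Coalgebra.counit (J l) = 1
  dyn : ∀ l : T,
    WHA.ext12 k U Coalgebra.comul (J l) * (∑ m : T, withP k T U P m (J (l + m)))
      = WHA.ext23 k U Coalgebra.comul (J l) * WHA.leg23 k U (J l)

end DQG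

namespace DQG

variable (k : Type*) [Field k]
variable (T : Type*) [AddCommGroup T] [Fintype T] [DecidableEq T]
variable (U : Type*) [Ring U] [HopfAlgebra k U]

/-- The functional `φ^x_{λ¹λ²}` on `H = End_k(A) ⊗ U`. -/
def phi (l1 l2 : T) (x : U →ₗ[k] k) : (Matrix T T k ⊗[k] U) →ₗ[k] k :=
  (TensorProduct.lid k k).toLinearMap ∘ₗ TensorProduct.map (entry k T l1 l2) x

end DQG

namespace Aux
open DQG

set_option linter.unusedSectionVars false
set_option synthInstance.maxHeartbeats 1000000
set_option maxHeartbeats 1000000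

variable {k : Type*} [Field k]
variable {T : Type*} [AddCommGroup T] [Fintype T] [DecidableEq T]
variable {U : Type*} [Ring U] [HopfAlgebra k U]


section ring
variable (k T U)
local notation "HH" => (Matrix T T k ⊗[k] U) ⊗[k] (Matrix T T k ⊗[k] U)
local notation "UU" => U ⊗[k] U

lemma hh_zero_mul (z : HH) : 0 * z = 0 := zero_mul z
lemma hh_mul_zero (z : HH) : z * 0 = 0 := mul_zero z
lemma hh_add_mul (a b c : HH) : (a + b) * c = a * c + b * c := by
  letI : NonUnitalNonAssocSemiring HH := inferInstance
  exact add_mul a b c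
lemma hh_mul_add (a b c : HH) : a * (b + c) = a * b + a * c := by
  letI : NonUnitalNonAssocSemiring HH := inferInstance
  exact mul_add a b c
lemma hh_mul_assoc (a b c : HH) : a * b * c = a * (b * c) := mul_assoc a b c
lemma hh_sum_mul {ι : Type*} (s : Finset ι) (f : ι → HH) (c : HH) :
    (∑ i ∈ s, f i) * c = ∑ i ∈ s, f i * c := by
  letI : NonUnitalNonAssocSemiring HH := inferInstance
  exact Finset.sum_mul s f c
lemma hh_mul_sum {ι : Type*} (s : Finset ι) (f : ι → HH) (c : HH) :
    c * (∑ i ∈ s, f i) = ∑ i ∈ s, c * f i := by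
  letI : NonUnitalNonAssocSemiring HH := inferInstance
  exact Finset.mul_sum s f c
lemma uu_zero_mul (z : UU) : 0 * z = 0 := zero_mul z
lemma uu_mul_zero (z : UU) : z * 0 = 0 := mul_zero z
lemma uu_add_mul (a b c : UU) : (a + b) * c = a * c + b * c := by
  letI : NonUnitalNonAssocSemiring UU := inferInstance
  exact add_mul a b c
lemma uu_mul_add (a b c : UU) : a * (b + c) = a * b + a * c := by
  letI : NonUnitalNonAssocSemiring UU := inferInstance
  exact mul_add a b c
lemma uu_mul_assoc (a b c : UU) : a * b * c = a * (b * c) := mul_assoc a b c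
end ring

/-- `c ⊗ d ↦ (A ⊗ c) ⊗ (B ⊗ d)`. -/
noncomputable def emb2 (A B : Matrix T T k) :
    U ⊗[k] U →ₗ[k] (Matrix T T k ⊗[k] U) ⊗[k] (Matrix T T k ⊗[k] U) :=
  TensorProduct.map (TensorProduct.mk k (Matrix T T k) U A) (TensorProduct.mk k (Matrix T T k) U B)

lemma emb2_tmul (A B : Matrix T T k) (c d : U) :
    emb2 A B (c ⊗ₜ[k] d) = (A ⊗ₜ[k] c) ⊗ₜ[k] (B ⊗ₜ[k] d) := rfl

lemma emb2_zero_left (B : Matrix T T k) (s : U ⊗[k] U) : emb2 (0 : Matrix T T k) B s = 0 := by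
  induction s using TensorProduct.induction_on with
  | zero => simp
  | tmul c d => simp [emb2_tmul, TensorProduct.zero_tmul]
  | add s t hs ht => simp [map_add, hs, ht]

lemma emb2_mul (A A' B B' : Matrix T T k) (s t : U ⊗[k] U) :
    emb2 A B s * emb2 A' B' t = emb2 (A * A') (B * B') (s * t) := by
  induction s using TensorProduct.induction_on with
  | zero => simp [hh_zero_mul, uu_zero_mul]
  | tmul c d =>
    induction t using TensorProduct.induction_on with
    | zero => simp [hh_mul_zero, uu_mul_zero]
    | tmul c' d' => simp [emb2_tmul, Algebra.TensorProduct.tmul_mul_tmul]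
    | add t₁ t₂ h₁ h₂ => simp only [map_add, hh_mul_add, uu_mul_add, h₁, h₂]
  | add s₁ s₂ h₁ h₂ => simp only [map_add, hh_add_mul, uu_add_mul, h₁, h₂]

lemma E_mul (a b c d : T) :
    E k T a b * E k T c d = if b = c then E k T a d else 0 := by
  unfold E
  by_cases h : b = c
  · subst h; simp
  · rw [Matrix.single_mul_single_of_ne (h := h)]; simp [h]

lemma E_apply (a b c d : T) : E k T a b c d = if a = c ∧ b = d then (1 : k) else 0 := by
  simp [E, Matrix.single]

lemma entry_apply (l m : T) (A : Matrix T T k) : entry k T l m A = A l m := rfl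

lemma pairF_tmul {B : Type*} [Ring B] [Algebra k B] (φ ψ : B →ₗ[k] k) (a b : B) :
    WHA.pairF k B φ ψ (a ⊗ₜ[k] b) = φ a * ψ b := by
  simp [WHA.pairF]

lemma phi_tmul (l1 l2 : T) (x : U →ₗ[k] k) (A : Matrix T T k) (u : U) :
    phi k T U l1 l2 x (A ⊗ₜ[k] u) = A l1 l2 * x u := by
  simp [DQG.phi, entry_apply]

lemma Phi_emb2 (m1 m2 l1 l2 : T) (y x : U →ₗ[k] k) (A B : Matrix T T k) (s : U ⊗[k] U) :
    WHA.pairF k (Matrix T T k ⊗[k] U) (phi k T U m1 m2 y) (phi k T U l1 l2 x) (emb2 A B s)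
      = A m1 m2 * B l1 l2 * WHA.pairF k U y x s := by
  induction s using TensorProduct.induction_on with
  | zero => simp
  | tmul c d => rw [emb2_tmul, pairF_tmul, pairF_tmul, phi_tmul, phi_tmul]; ring
  | add s t hs ht => simp only [map_add, hs, ht, mul_add]

lemma x_sandwich (P : T → U) (hP : IsPSystem k T U P) (a1 a2 : T) (x : U →ₗ[k] k)
    (hx : ∀ u : U, x u = x (P a1 * u * P a2)) (μ ν : T) (w : U) :
    x (P μ * w * P ν) = (if a1 = μ then (1:k) else 0) * (if a2 = ν then (1:k) else 0) * x w := by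
  have key : P a1 * (P μ * w * P ν) * P a2 = (P a1 * P μ) * w * (P ν * P a2) := by
    noncomm_ring
  rw [hx (P μ * w * P ν), key, hP.orth, hP.orth]
  by_cases h1 : a1 = μ
  · by_cases h2 : a2 = ν
    · subst h1; subst h2
      rw [if_pos rfl, if_pos rfl, ← hx w]
      simp
    · rw [if_pos h1, if_neg (fun h => h2 h.symm)]
      simp [h2]
  · rw [if_neg h1]
    simp [h1]

lemma pair_sandwich (P : T → U) (hP : IsPSystem k T U P) (a1 a2 : T) (x : U →ₗ[k] k)
    (hx : ∀ u : U, x u = x (P a1 * u * P a2)) (y : U →ₗ[k] k) (μ ν : T) (s : U ⊗[k] U) :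
    WHA.pairF k U y x (((1:U) ⊗ₜ[k] P μ) * s * ((1:U) ⊗ₜ[k] P ν))
      = (if a1 = μ then (1:k) else 0) * (if a2 = ν then (1:k) else 0) * WHA.pairF k U y x s := by
  induction s using TensorProduct.induction_on with
  | zero => simp [uu_zero_mul, uu_mul_zero]
  | tmul c d =>
    rw [Algebra.TensorProduct.tmul_mul_tmul, Algebra.TensorProduct.tmul_mul_tmul,
      pairF_tmul, pairF_tmul, x_sandwich P hP a1 a2 x hx]
    simp only [one_mul, mul_one]
    ring
  | add s t hs ht =>
    simp only [uu_mul_add, uu_add_mul, map_add, hs, ht, mul_add]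

lemma ΔM_E (n1 n2 : T) : ΔM k T (E k T n1 n2) = E k T n1 n2 ⊗ₜ[k] E k T n1 n2 := by
  simp only [ΔM, LinearMap.sum_apply, LinearMap.smulRight_apply, entry_apply, E_apply,
    ite_and, ite_smul, zero_smul, one_smul]
  rw [Finset.sum_eq_single n1]
  · rw [Finset.sum_eq_single n2]
    · simp
    · intro b _ hb; simp [Ne.symm hb]
    · intro h; exact absurd (Finset.mem_univ n2) h
  · intro b _ hb
    apply Finset.sum_eq_zero; intro c _; simp [Ne.symm hb]
  · intro h; exact absurd (Finset.mem_univ n1) h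

lemma ttc_E (A : Matrix T T k) (t : U ⊗[k] U) :
    (TensorProduct.tensorTensorTensorComm k (Matrix T T k) (Matrix T T k) U U)
      ((A ⊗ₜ[k] A) ⊗ₜ[k] t) = emb2 A A t := by
  induction t using TensorProduct.induction_on with
  | zero => simp
  | tmul c d => simp [emb2_tmul]
  | add s t hs ht => simp only [TensorProduct.tmul_add, map_add, hs, ht]

lemma ΔH_E (n1 n2 : T) (u : U) :
    ΔH k T U (E k T n1 n2 ⊗ₜ[k] u)
      = emb2 (E k T n1 n2) (E k T n1 n2) (Coalgebra.comul (R := k) u) := by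
  simp only [ΔH, LinearMap.comp_apply, LinearEquiv.coe_coe, TensorProduct.map_tmul,
    ΔM_E, LinearMap.id_apply]
  exact ttc_E _ _

lemma Θbar_eq (P : T → U) :
    Θbar k T U P = ∑ l : T, ∑ m : T, emb2 (E k T (l+m) l) (E k T l l) ((1:U) ⊗ₜ[k] P m) := rfl

lemma Θ_eq (P : T → U) :
    Θ k T U P = ∑ l : T, ∑ m : T, emb2 (E k T l (l+m)) (E k T l l) ((1:U) ⊗ₜ[k] P m) := rfl

lemma emb_eq (J : T → U ⊗[k] U) :
    emb k T U J = ∑ l : T, emb2 (E k T l l) (E k T l l) (J l) := rfl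

lemma emb_mul_emb2 (J : T → U ⊗[k] U) (n1 n2 : T) (t : U ⊗[k] U) :
    emb k T U J * emb2 (E k T n1 n2) (E k T n1 n2) t
      = emb2 (E k T n1 n2) (E k T n1 n2) (J n1 * t) := by
  rw [emb_eq, hh_sum_mul]
  have h1 : ∀ l : T, emb2 (E k T l l) (E k T l l) (J l) * emb2 (E k T n1 n2) (E k T n1 n2) t
      = if l = n1 then emb2 (E k T n1 n2) (E k T n1 n2) (J n1 * t) else 0 := by
    intro l
    rw [emb2_mul, E_mul]
    by_cases h : l = n1
    · subst h; simp
    · simp only [if_neg h]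
      exact emb2_zero_left _ _
  simp only [h1]
  rw [Finset.sum_ite_eq']
  simp

lemma emb2_mul_emb (J : T → U ⊗[k] U) (n1 n2 : T) (t : U ⊗[k] U) :
    emb2 (E k T n1 n2) (E k T n1 n2) t * emb k T U J
      = emb2 (E k T n1 n2) (E k T n1 n2) (t * J n2) := by
  rw [emb_eq, hh_mul_sum]
  have h1 : ∀ l : T, emb2 (E k T n1 n2) (E k T n1 n2) t * emb2 (E k T l l) (E k T l l) (J l)
      = if n2 = l then emb2 (E k T n1 n2) (E k T n1 n2) (t * J n2) else 0 := by
    intro l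
    rw [emb2_mul, E_mul]
    by_cases h : n2 = l
    · subst h; simp
    · simp only [if_neg h]
      exact emb2_zero_left _ _
  simp only [h1]
  rw [Finset.sum_ite_eq]
  simp

lemma Θbar_mul_emb2 (P : T → U) (n1 n2 : T) (s : U ⊗[k] U) :
    Θbar k T U P * emb2 (E k T n1 n2) (E k T n1 n2) s
      = ∑ m : T, emb2 (E k T (n1+m) n2) (E k T n1 n2) (((1:U) ⊗ₜ[k] P m) * s) := by
  rw [Θbar_eq, hh_sum_mul]
  have h1 : ∀ l : T, (∑ m : T, emb2 (E k T (l+m) l) (E k T l l) ((1:U) ⊗ₜ[k] P m)) *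
      emb2 (E k T n1 n2) (E k T n1 n2) s
      = if l = n1 then (∑ m : T, emb2 (E k T (n1+m) n2) (E k T n1 n2) (((1:U) ⊗ₜ[k] P m) * s))
        else 0 := by
    intro l
    rw [hh_sum_mul]
    by_cases h : l = n1
    · subst h
      rw [if_pos rfl]
      refine Finset.sum_congr rfl fun m _ => ?_
      rw [emb2_mul, E_mul, E_mul]
      simp
    · rw [if_neg h]
      refine Finset.sum_eq_zero fun m _ => ?_
      rw [emb2_mul, E_mul, E_mul, if_neg h, if_neg h]
      exact emb2_zero_left _ _
  simp only [h1]
  rw [Finset.sum_ite_eq']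
  simp

lemma emb2_mul_Θ (P : T → U) (n1 n2 a : T) (s : U ⊗[k] U) :
    emb2 (E k T a n2) (E k T n1 n2) s * Θ k T U P
      = ∑ m : T, emb2 (E k T a (n2+m)) (E k T n1 n2) (s * ((1:U) ⊗ₜ[k] P m)) := by
  rw [Θ_eq, hh_mul_sum]
  have h1 : ∀ l : T, emb2 (E k T a n2) (E k T n1 n2) s *
      (∑ m : T, emb2 (E k T l (l+m)) (E k T l l) ((1:U) ⊗ₜ[k] P m))
      = if n2 = l then (∑ m : T, emb2 (E k T a (n2+m)) (E k T n1 n2) (s * ((1:U) ⊗ₜ[k] P m)))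
        else 0 := by
    intro l
    rw [hh_mul_sum]
    by_cases h : n2 = l
    · subst h
      rw [if_pos rfl]
      refine Finset.sum_congr rfl fun m _ => ?_
      rw [emb2_mul, E_mul, E_mul]
      simp
    · rw [if_neg h]
      refine Finset.sum_eq_zero fun m _ => ?_
      rw [emb2_mul, E_mul, E_mul, if_neg h, if_neg h]
      exact emb2_zero_left _ _
  simp only [h1]
  rw [Finset.sum_ite_eq]
  simp

end Aux

namespace Aux
open DQG
set_option linter.unusedSectionVars false
set_option synthInstance.maxHeartbeats 1000000
set_option maxHeartbeats 4000000

variable {k : Type*} [Field k]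
variable {T : Type*} [AddCommGroup T] [Fintype T] [DecidableEq T]
variable {U : Type*} [Ring U] [HopfAlgebra k U]

lemma emb2_mul_emb' (J : T → U ⊗[k] U) (a b n2 : T) (t : U ⊗[k] U) :
    emb2 (E k T a n2) (E k T b n2) t * emb k T U J
      = emb2 (E k T a n2) (E k T b n2) (t * J n2) := by
  rw [emb_eq, hh_mul_sum]
  have h1 : ∀ l : T, emb2 (E k T a n2) (E k T b n2) t * emb2 (E k T l l) (E k T l l) (J l)
      = if n2 = l then emb2 (E k T a n2) (E k T b n2) (t * J n2) else 0 := by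
    intro l
    rw [emb2_mul, E_mul, E_mul]
    by_cases h : n2 = l
    · subst h; simp
    · simp only [if_neg h]
      exact emb2_zero_left _ _
  simp only [h1]
  rw [Finset.sum_ite_eq]
  simp

lemma stdBasis_smul (i j : T) (c : k) :
    Matrix.single i j c = c • E k T i j := by
  ext a b
  simp only [Matrix.single, Matrix.of_apply, Matrix.smul_apply, E_apply, smul_eq_mul]
  split_ifs <;> simp

lemma hh_mul_smul (c : k) (a b : (Matrix T T k ⊗[k] U) ⊗[k] (Matrix T T k ⊗[k] U)) :
    a * (c • b) = c • (a * b) := mul_smul_comm c a b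

lemma hh_smul_mul (c : k) (a b : (Matrix T T k ⊗[k] U) ⊗[k] (Matrix T T k ⊗[k] U)) :
    (c • a) * b = c • (a * b) := smul_mul_assoc c a b

end Aux

set_option maxHeartbeats 4000000 in
set_option synthInstance.maxHeartbeats 1000000 in
/-- the convolution product of the dual of the twisted weak Hopf algebra
`H_J`, computed on the functionals `φ^x_{λ¹λ²}`. -/
theorem dual_multiplication
    (k : Type*) [Field k]
    (T : Type*) [AddCommGroup T] [Fintype T] [DecidableEq T]
    (U : Type*) [Ring U] [HopfAlgebra k U] [FiniteDimensional k U]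
    (P : T → U) (hP : DQG.IsPSystem k T U P)
    (J Jbar : T → U ⊗[k] U) (hJ : DQG.IsDynTwist k T U P J Jbar)
    (ΔJ : (Matrix T T k ⊗[k] U) →ₗ[k] (Matrix T T k ⊗[k] U) ⊗[k] (Matrix T T k ⊗[k] U))
    (hΔJ : ∀ h : (Matrix T T k ⊗[k] U), ΔJ h =
      (DQG.Θbar k T U P * DQG.emb k T U Jbar) * DQG.ΔH k T U h *
        (DQG.emb k T U J * DQG.Θ k T U P))
    (a1 a2 b1 b2 l1 l2 m1 m2 : T) (x y : U →ₗ[k] k)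
    (hx : ∀ u : U, x u = x (P a1 * u * P a2))
    (hy : ∀ u : U, y u = y (P b1 * u * P b2))
    (z : U →ₗ[k] k)
    (hz : z = WHA.pairF k U y x ∘ₗ LinearMap.mulLeft k (Jbar l1) ∘ₗ
      LinearMap.mulRight k (J l2) ∘ₗ Coalgebra.comul) :
    ∀ h : (Matrix T T k ⊗[k] U),
      WHA.pairF k (Matrix T T k ⊗[k] U) (DQG.phi k T U m1 m2 y) (DQG.phi k T U l1 l2 x) (ΔJ h)
        = (if a1 = m1 - l1 then (1 : k) else 0) * (if a2 = m2 - l2 then (1 : k) else 0) *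
            DQG.phi k T U l1 l2 z h := by
  classical
  have key : ∀ (n1 n2 : T) (u : U),
      WHA.pairF k (Matrix T T k ⊗[k] U) (DQG.phi k T U m1 m2 y) (DQG.phi k T U l1 l2 x)
        ((DQG.Θbar k T U P * DQG.emb k T U Jbar) * DQG.ΔH k T U (DQG.E k T n1 n2 ⊗ₜ[k] u) *
          (DQG.emb k T U J * DQG.Θ k T U P))
        = (if a1 = m1 - l1 then (1 : k) else 0) * (if a2 = m2 - l2 then (1 : k) else 0) *
            DQG.phi k T U l1 l2 z (DQG.E k T n1 n2 ⊗ₜ[k] u) := by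
    intro n1 n2 u
    rw [Aux.ΔH_E]
    set t := Coalgebra.comul (R := k) u with ht
    have e1 : (DQG.Θbar k T U P * DQG.emb k T U Jbar) *
        Aux.emb2 (DQG.E k T n1 n2) (DQG.E k T n1 n2) t
        = ∑ m : T, Aux.emb2 (DQG.E k T (n1+m) n2) (DQG.E k T n1 n2)
            (((1:U) ⊗ₜ[k] P m) * (Jbar n1 * t)) := by
      rw [Aux.hh_mul_assoc, Aux.emb_mul_emb2, Aux.Θbar_mul_emb2]
    rw [e1]
    have e2 : (∑ m : T, Aux.emb2 (DQG.E k T (n1+m) n2) (DQG.E k T n1 n2)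
          (((1:U) ⊗ₜ[k] P m) * (Jbar n1 * t))) * (DQG.emb k T U J * DQG.Θ k T U P)
        = ∑ m : T, ∑ m' : T, Aux.emb2 (DQG.E k T (n1+m) (n2+m')) (DQG.E k T n1 n2)
            (((((1:U) ⊗ₜ[k] P m) * (Jbar n1 * t)) * J n2) * ((1:U) ⊗ₜ[k] P m')) := by
      rw [← Aux.hh_mul_assoc, Aux.hh_sum_mul, Aux.hh_sum_mul]
      refine Finset.sum_congr rfl fun m _ => ?_
      rw [Aux.emb2_mul_emb', Aux.emb2_mul_Θ]
    rw [e2, map_sum]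
    simp only [map_sum, Aux.Phi_emb2, Aux.E_apply]
    rw [Finset.sum_eq_single (m1 - n1)]
    rotate_left
    · intro b _ hb
      apply Finset.sum_eq_zero
      intro c _
      have hcnd : ¬ (n1 + b = m1 ∧ n2 + c = m2) := by
        rintro ⟨h1', _⟩
        exact hb (by rw [← h1']; abel)
      rw [if_neg hcnd, zero_mul, zero_mul]
    · intro hmem; exact absurd (Finset.mem_univ _) hmem
    rw [Finset.sum_eq_single (m2 - n2)]
    rotate_left
    · intro c _ hc
      have hcnd : ¬ (n1 + (m1 - n1) = m1 ∧ n2 + c = m2) := by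
        rintro ⟨_, h2'⟩
        exact hc (by rw [← h2']; abel)
      rw [if_neg hcnd, zero_mul, zero_mul]
    · intro hmem; exact absurd (Finset.mem_univ _) hmem
    have hcond : n1 + (m1 - n1) = m1 ∧ n2 + (m2 - n2) = m2 := ⟨by abel, by abel⟩
    rw [if_pos hcond, one_mul]
    have hre : ((((1:U) ⊗ₜ[k] P (m1 - n1)) * (Jbar n1 * t)) * J n2) * ((1:U) ⊗ₜ[k] P (m2 - n2))
        = (((1:U) ⊗ₜ[k] P (m1 - n1)) * ((Jbar n1 * t) * J n2)) * ((1:U) ⊗ₜ[k] P (m2 - n2)) := by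
      rw [Aux.uu_mul_assoc (a := ((1:U) ⊗ₜ[k] P (m1 - n1))) (b := (Jbar n1 * t)) (c := J n2)]
    rw [hre, Aux.pair_sandwich P hP a1 a2 x hx y]
    have hzu : z u = WHA.pairF k U y x (Jbar l1 * (t * J l2)) := by
      rw [hz]
      simp only [LinearMap.comp_apply, LinearMap.mulLeft_apply, LinearMap.mulRight_apply, ht]
    rw [Aux.phi_tmul, Aux.E_apply, hzu]
    by_cases hn : n1 = l1 ∧ n2 = l2
    · obtain ⟨rfl, rfl⟩ := hn
      rw [if_pos ⟨rfl, rfl⟩]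
      rw [Aux.uu_mul_assoc]
      ring
    · rw [if_neg hn]
      simp
  have main : ∀ h0 : Matrix T T k ⊗[k] U,
      WHA.pairF k (Matrix T T k ⊗[k] U) (DQG.phi k T U m1 m2 y) (DQG.phi k T U l1 l2 x)
        ((DQG.Θbar k T U P * DQG.emb k T U Jbar) * DQG.ΔH k T U h0 *
          (DQG.emb k T U J * DQG.Θ k T U P))
        = (if a1 = m1 - l1 then (1 : k) else 0) * (if a2 = m2 - l2 then (1 : k) else 0) *
            DQG.phi k T U l1 l2 z h0 := by
    intro h0
    induction h0 using TensorProduct.induction_on with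
    | zero => simp [Aux.hh_mul_zero, Aux.hh_zero_mul]
    | tmul A u =>
      have hA : (A ⊗ₜ[k] u : Matrix T T k ⊗[k] U)
          = ∑ n1 : T, ∑ n2 : T, A n1 n2 • (DQG.E k T n1 n2 ⊗ₜ[k] u) := by
        conv_lhs => rw [Matrix.matrix_eq_sum_single A]
        rw [TensorProduct.sum_tmul]
        refine Finset.sum_congr rfl fun n1 _ => ?_
        rw [TensorProduct.sum_tmul]
        refine Finset.sum_congr rfl fun n2 _ => ?_
        rw [Aux.stdBasis_smul, TensorProduct.smul_tmul']
      rw [hA]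
      simp only [map_sum, map_smul, Aux.hh_mul_sum, Aux.hh_sum_mul, Aux.hh_mul_smul,
        Aux.hh_smul_mul, smul_eq_mul, Finset.mul_sum]
      refine Finset.sum_congr rfl fun n1 _ => Finset.sum_congr rfl fun n2 _ => ?_
      rw [key n1 n2 u]
      ring
    | add s r hs hr =>
      simp only [map_add, Aux.hh_mul_add, Aux.hh_add_mul, hs, hr, mul_add]
  intro h
  rw [hΔJ h]
  exact main h
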